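/- For every real x ≥ 2 and every integer n with 2 ≤ n ≤ x, one has 0 ≤ (1/log x) · F(log(x/n)/log x) ≤ 1/(log n) − 1/(log(x²/n)) ≤ min{1/(log n), 2·log(x/n)/(log n)²}. -/

import Mathlib

noncomputable def F (u : ℝ) : ℝ :=
  ∫ y in Set.Ioi (0 : ℝ), Real.sinh (2 * u * y) / Real.cosh y ^ 2

open MeasureTheory Real Set

lemma integral_exp_neg_mul_Ioi {b : ℝ} (hb : 0 < b) :
    ∫ x in Set.Ioi (0 : ℝ), Real.exp (-(b * x)) = 1 / b := by
  have := integral_comp_mul_left_Ioi (fun y => Real.exp (-y)) 0 hb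
  simp only [mul_zero, smul_eq_mul] at this
  rw [this, integral_exp_neg_Ioi_zero]
  rw [one_div, mul_one]

lemma F_le {u : ℝ} (hu0 : 0 ≤ u) (hu1 : u < 1) :
    F u ≤ 1 / (1 - u) - 1 / (1 + u) := by
  set g : ℝ → ℝ := fun y => 2 * (Real.exp (-((2 - 2 * u) * y)) - Real.exp (-((2 + 2 * u) * y)))
    with hg
  have h1 : (0 : ℝ) < 2 - 2 * u := by linarith
  have h2 : (0 : ℝ) < 2 + 2 * u := by linarith
  have hint1 : IntegrableOn (fun y => Real.exp (-((2 - 2 * u) * y))) (Ioi (0 : ℝ)) := by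
    have h := exp_neg_integrableOn_Ioi (0 : ℝ) h1
    exact h.congr_fun (fun y _ => by simp only [neg_mul]) measurableSet_Ioi
  have hint2 : IntegrableOn (fun y => Real.exp (-((2 + 2 * u) * y))) (Ioi (0 : ℝ)) := by
    have h := exp_neg_integrableOn_Ioi (0 : ℝ) h2
    exact h.congr_fun (fun y _ => by simp only [neg_mul]) measurableSet_Ioi
  have hgint : IntegrableOn g (Ioi (0 : ℝ)) := ((hint1.sub hint2).const_mul 2)
  have hle : F u ≤ ∫ y in Set.Ioi (0 : ℝ), g y := by
    refine integral_mono_of_nonneg ?_ hgint ?_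
    · filter_upwards [ae_restrict_mem measurableSet_Ioi] with y hy
      exact div_nonneg (Real.sinh_nonneg_iff.mpr (mul_nonneg (by positivity) hy.le)) (by positivity)
    · filter_upwards [ae_restrict_mem measurableSet_Ioi] with y hy
      have hy0 : (0 : ℝ) ≤ y := le_of_lt hy
      have hcosh : Real.exp y ^ 2 / 4 ≤ Real.cosh y ^ 2 := by
        have hc : Real.exp y / 2 ≤ Real.cosh y := by
          rw [Real.cosh_eq]
          have := (Real.exp_pos (-y)).le
          linarith
        calc Real.exp y ^ 2 / 4 = (Real.exp y / 2) ^ 2 := by ring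
          _ ≤ Real.cosh y ^ 2 := pow_le_pow_left₀ (by positivity) hc 2
      have hsnn : 0 ≤ Real.sinh (2 * u * y) := Real.sinh_nonneg_iff.mpr (by positivity)
      have key : Real.sinh (2 * u * y) / Real.cosh y ^ 2 ≤
          Real.sinh (2 * u * y) / (Real.exp y ^ 2 / 4) :=
        div_le_div_of_nonneg_left hsnn (by positivity) hcosh
      have h2y : Real.exp y ^ 2 = Real.exp (2 * y) := by
        rw [show (2 : ℝ) * y = y + y by ring, Real.exp_add]; ring
      have e1 : Real.exp (-((2 - 2 * u) * y)) = Real.exp (2 * u * y) / Real.exp (2 * y) := by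
        rw [← Real.exp_sub]; congr 1; ring
      have e2 : Real.exp (-((2 + 2 * u) * y)) = Real.exp (-(2 * u * y)) / Real.exp (2 * y) := by
        rw [← Real.exp_sub]; congr 1; ring
      have heq : Real.sinh (2 * u * y) / (Real.exp y ^ 2 / 4) = g y := by
        show _ = 2 * (Real.exp (-((2 - 2 * u) * y)) - Real.exp (-((2 + 2 * u) * y)))
        rw [Real.sinh_eq, h2y, e1, e2]
        have := (Real.exp_pos (2 * y)).ne'
        field_simp
        ring
      calc Real.sinh (2 * u * y) / Real.cosh y ^ 2 ≤ _ := key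
        _ = g y := heq
  have hcalc : ∫ y in Set.Ioi (0 : ℝ), g y = 1 / (1 - u) - 1 / (1 + u) := by
    have : ∫ y in Set.Ioi (0 : ℝ), g y =
        2 * ((∫ y in Set.Ioi (0 : ℝ), Real.exp (-((2 - 2 * u) * y))) -
          ∫ y in Set.Ioi (0 : ℝ), Real.exp (-((2 + 2 * u) * y))) := by
      rw [hg, integral_const_mul, integral_sub hint1 hint2]
    rw [this, integral_exp_neg_mul_Ioi h1, integral_exp_neg_mul_Ioi h2]
    have e1 : (1 : ℝ) - u ≠ 0 := by linarith
    have e2 : (1 : ℝ) + u ≠ 0 := by linarith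
    field_simp
  calc F u ≤ _ := hle
    _ = _ := hcalc

theorem weight_inequalities (x : ℝ) (hx : 2 ≤ x) (n : ℕ) (hn : 2 ≤ n) (hnx : (n : ℝ) ≤ x) :
    0 ≤ (1 / Real.log x) * F (Real.log (x / n) / Real.log x) ∧
    (1 / Real.log x) * F (Real.log (x / n) / Real.log x) ≤
      1 / Real.log n - 1 / Real.log (x ^ 2 / n) ∧
    1 / Real.log n - 1 / Real.log (x ^ 2 / n) ≤
      min (1 / Real.log n) (2 * Real.log (x / n) / (Real.log n) ^ 2) := by
  have hx0 : (0 : ℝ) < x := by linarith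
  have hn1 : (1 : ℝ) < n := by exact_mod_cast Nat.lt_of_lt_of_le Nat.one_lt_two hn
  have hn0 : (0 : ℝ) < n := by linarith
  set L := Real.log x with hL
  set t := Real.log n with ht
  have hLpos : 0 < L := Real.log_pos (by linarith)
  have htpos : 0 < t := Real.log_pos hn1
  have htL : t ≤ L := Real.log_le_log hn0 hnx
  have hlogdiv : Real.log (x / n) = L - t := Real.log_div hx0.ne' hn0.ne'
  have hlog2 : Real.log (x ^ 2 / n) = 2 * L - t := by
    rw [Real.log_div (by positivity) hn0.ne', Real.log_pow]
    push_cast; ring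
  set u := Real.log (x / n) / Real.log x with hu
  have hu' : u = (L - t) / L := by rw [hu, hlogdiv]
  have hu0 : 0 ≤ u := by
    rw [hu']; exact div_nonneg (by linarith) hLpos.le
  have hu1 : u < 1 := by
    rw [hu', div_lt_one hLpos]; linarith
  have h2Lt : 0 < 2 * L - t := by linarith
  have hFnn : 0 ≤ F u := by
    refine setIntegral_nonneg measurableSet_Ioi fun y hy => ?_
    have hy0 : (0 : ℝ) ≤ y := (le_of_lt hy)
    exact div_nonneg (Real.sinh_nonneg_iff.mpr (by positivity)) (by positivity)
  refine ⟨mul_nonneg (by positivity) hFnn, ?_, ?_⟩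
  · have hle := F_le hu0 hu1
    have h1u : 1 - u = t / L := by rw [hu']; field_simp; ring
    have h1u' : 1 + u = (2 * L - t) / L := by rw [hu']; field_simp; ring
    calc (1 / L) * F u ≤ (1 / L) * (1 / (1 - u) - 1 / (1 + u)) :=
          mul_le_mul_of_nonneg_left hle (by positivity)
      _ = 1 / t - 1 / Real.log (x ^ 2 / n) := by
          rw [hlog2, h1u, h1u']
          field_simp
  · rw [hlog2, hlogdiv]
    refine le_min ?_ ?_
    · have : 0 ≤ 1 / (2 * L - t) := by positivity
      linarith
    · rw [div_sub_div _ _ htpos.ne' h2Lt.ne', div_le_div_iff₀ (by positivity) (by positivity)]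
      nlinarith [mul_nonneg htpos.le (sq_nonneg (L - t))]
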